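/- (Core property.) Let 1 ≤ k ≤ n−1 and suppose G is the core-periphery graph in which the hub nodes 1,...,k each have degree n−1 (each hub is adjacent to every other node), and each of the n−k peripheral nodes has degree k, being adjacent exactly to the k hubs. Then at LEC order k, every hub node h ∈ {1,...,k} receives the maximal score: c_h^{LEC(k)} = 1. -/

import Mathlib

open Matrix Finset

/-- Core property: in the core-periphery graph with `k` fully
connected hub nodes (degree `n−1`) and `n−k` peripheral nodes adjacent exactly to
the hubs, every hub node receives the maximal LEC score `1` at order `k`. -/
theorem lec_core
    (n : ℕ) (hn : 0 < n)
    (A : Matrix (Fin n) (Fin n) ℝ)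
    (hA01 : ∀ i j, A i j = 0 ∨ A i j = 1)
    (hAsym : ∀ i j, A i j = A j i)
    (hAdiag : ∀ i, A i i = 0)
    (d : Fin n → ℝ) (hd : ∀ i, d i = ∑ j, A i j)
    (L : Matrix (Fin n) (Fin n) ℝ) (hLdef : L = Matrix.diagonal d - A)
    (q : ℕ → Fin n → ℝ) (lam : ℕ → ℝ)
    (heig : ∀ s, s < n → L *ᵥ q s = lam s • q s)
    (horth : ∀ s, s < n → ∀ t, t < n → ∑ i, q s i * q t i = if s = t then 1 else 0)
    (hdesc : ∀ s t, s ≤ t → t < n → lam t ≤ lam s)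
    (hlam0 : lam (n - 1) = 0)
    (hqlast : ∀ i, q (n - 1) i = 1 / Real.sqrt n)
    (lec : ℕ → Fin n → ℝ)
    (hlec : ∀ r i, lec r i = (q (n - 1) i) ^ 2 + ∑ s ∈ Finset.range r, (q s i) ^ 2)
    (k : ℕ) (hk1 : 1 ≤ k) (hkn : k ≤ n - 1)
    (hhub : ∀ i j : Fin n, i ≠ j → ((i : ℕ) < k ∨ (j : ℕ) < k) → A i j = 1)
    (hper : ∀ i j : Fin n, k ≤ (i : ℕ) → k ≤ (j : ℕ) → A i j = 0) :
    ∀ h : Fin n, (h : ℕ) < k → lec k h = 1 := by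
  have hkltn : k < n := by omega
  -- ∑ over Fin n of (if j = x then 0 else 1) = n - 1
  have hone : ∀ x : Fin n, ∑ j : Fin n, (if j = x then (0:ℝ) else 1) = (n:ℝ) - 1 := by
    intro x
    have h1 : ∀ j : Fin n, (if j = x then (0:ℝ) else 1)
        = 1 - (if j = x then (1:ℝ) else 0) := by
      intro j; by_cases hj : j = x <;> simp [hj]
    rw [Finset.sum_congr rfl (fun j _ => h1 j), Finset.sum_sub_distrib,
      Finset.sum_ite_eq' univ x (fun _ => (1:ℝ))]
    simp [Finset.card_univ]
  -- eigen-equation coordinatewise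
  have hLapp : ∀ s : ℕ, s < n → ∀ i, lam s * q s i = d i * q s i - ∑ j, A i j * q s j := by
    intro s hs i
    have h0 := congrFun (heig s hs) i
    rw [Pi.smul_apply, smul_eq_mul] at h0
    rw [← h0]
    simp only [hLdef, Matrix.mulVec, dotProduct, Matrix.sub_apply,
      Matrix.diagonal_apply, sub_mul, Finset.sum_sub_distrib, ite_mul, zero_mul]
    rw [Finset.sum_ite_eq univ i (fun j => d i * q s j)]
    simp
  -- normalization
  have hnorm : ∀ s : ℕ, s < n → ∑ i, q s i * q s i = 1 := by
    intro s hs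
    have := horth s hs s hs
    simpa using this
  -- eigenvectors other than the last are orthogonal to 1
  have hsum0 : ∀ s : ℕ, s < n - 1 → ∑ i, q s i = 0 := by
    intro s hs
    have h0 := horth s (by omega) (n - 1) (by omega)
    rw [if_neg (by omega)] at h0
    have h1 : ∑ i, q s i * q (n - 1) i = (1 / Real.sqrt n) * ∑ i, q s i := by
      rw [Finset.mul_sum]
      exact Finset.sum_congr rfl fun i _ => by rw [hqlast i]; ring
    rw [h1] at h0
    have hsn : Real.sqrt n ≠ 0 := by
      have : (0:ℝ) < n := by exact_mod_cast hn
      positivity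
    rcases mul_eq_zero.mp h0 with h | h
    · exact absurd h (by simp [hsn])
    · exact h
  -- hub rows of A
  have hAhub : ∀ hb : Fin n, (hb : ℕ) < k → ∀ j, A hb j = if j = hb then 0 else 1 := by
    intro hb hbk j
    by_cases hj : j = hb
    · simp [hj, hAdiag]
    · rw [if_neg hj]
      exact hhub hb j (fun e => hj e.symm) (Or.inl hbk)
  -- hub degree
  have hdhub : ∀ hb : Fin n, (hb : ℕ) < k → d hb = (n:ℝ) - 1 := by
    intro hb hbk
    rw [hd, Finset.sum_congr rfl fun j _ => hAhub hb hbk j, hone]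
  -- hub eigen equation
  have hhubeq : ∀ s : ℕ, s < n → ∀ hb : Fin n, (hb : ℕ) < k →
      lam s * q s hb = (n:ℝ) * q s hb - ∑ j, q s j := by
    intro s hs hb hbk
    have h0 := hLapp s hs hb
    have h1 : ∑ j, A hb j * q s j = (∑ j, q s j) - q s hb := by
      have h2 : ∀ j : Fin n, A hb j * q s j = q s j - (if j = hb then q s j else 0) := by
        intro j
        rw [hAhub hb hbk j]
        by_cases hj : j = hb <;> simp [hj]
      rw [Finset.sum_congr rfl fun j _ => h2 j, Finset.sum_sub_distrib,
        Finset.sum_ite_eq' univ hb (fun j => q s j)]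
      simp
    rw [h0, h1, hdhub hb hbk]
    ring
  -- every degree is at most n - 1
  have hdle : ∀ p : Fin n, d p ≤ (n:ℝ) - 1 := by
    intro p
    rw [hd, ← hone p]
    apply Finset.sum_le_sum
    intro j _
    by_cases hj : j = p
    · simp [hj, hAdiag]
    · rw [if_neg hj]
      rcases hA01 p j with h | h <;> rw [h] <;> norm_num
  -- dichotomy: no eigenvalue exceeds n
  have hdich : ∀ t : ℕ, t < n - 1 → (n:ℝ) ≤ lam t → lam t = n := by
    intro t htn hge
    by_contra hne
    have hgt : (n:ℝ) < lam t := lt_of_le_of_ne hge (Ne.symm hne)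
    have htn' : t < n := by omega
    -- hub coordinates vanish
    have hhv : ∀ hb : Fin n, (hb : ℕ) < k → q t hb = 0 := by
      intro hb hbk
      have h0 := hhubeq t htn' hb hbk
      rw [hsum0 t htn] at h0
      have h1 : (lam t - n) * q t hb = 0 := by linear_combination h0
      have h2 : lam t - n ≠ 0 := by linarith
      exact (mul_eq_zero.mp h1).resolve_left h2
    -- peripheral coordinates vanish
    have hpv : ∀ p : Fin n, k ≤ (p : ℕ) → q t p = 0 := by
      intro p hpk
      have h0 := hLapp t htn' p
      have h1 : ∑ j, A p j * q t j = 0 := by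
        apply Finset.sum_eq_zero
        intro j _
        by_cases hj : (j : ℕ) < k
        · rw [hhv j hj, mul_zero]
        · rw [hper p j hpk (le_of_not_gt hj), zero_mul]
      rw [h1, sub_zero] at h0
      by_contra hqp
      have h2 : lam t = d p := by
        have := mul_right_cancel₀ hqp h0
        exact this
      have := hdle p
      rw [← h2] at this
      have hn1 : (n:ℝ) - 1 < n := by linarith
      linarith
    -- contradiction with normalization
    have h0 := hnorm t htn'
    rw [Finset.sum_eq_zero (fun i _ => by
      by_cases hi : (i : ℕ) < k
      · rw [hhv i hi, mul_zero]
      · rw [hpv i (le_of_not_gt hi), zero_mul])] at h0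
    exact one_ne_zero h0.symm
  -- key: eigenvalues of index ≥ k (other than the last) are not n
  have hmain : ∀ s : ℕ, k ≤ s → s < n - 1 → lam s ≠ n := by
    intro s hks hs hlams
    -- then lam t = n for all t ≤ k
    have hln : ∀ t : ℕ, t ≤ k → lam t = n := by
      intro t ht
      have htn : t < n - 1 := by omega
      apply hdich t htn
      rw [← hlams]
      exact hdesc t s (ht.trans hks) (by omega)
    -- the number of hubs, as a sum
    have hcardk : ∑ j : Fin n, (if (j : ℕ) < k then (1:ℝ) else 0) = k := by
      rw [Fin.sum_univ_eq_sum_range (fun j => if j < k then (1:ℝ) else 0) n]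
      have h1 : ∀ i ∈ Finset.range n, (if i < k then (1:ℝ) else 0)
          = if i ∈ Finset.range k then (1:ℝ) else 0 := by
        intro i _; simp [Finset.mem_range]
      rw [Finset.sum_congr rfl h1, Finset.sum_ite_mem,
        Finset.inter_eq_right.mpr (Finset.range_subset_range.mpr hkltn.le)]
      simp
    -- peripheral coordinates are determined by hub coordinates
    have hpc : ∀ t : ℕ, t ≤ k → ∀ p : Fin n, k ≤ (p : ℕ) →
        ((n:ℝ) - k) * q t p = -(∑ j : Fin n, (if (j : ℕ) < k then (1:ℝ) else 0) * q t j) := by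
      intro t ht p hpk
      have htn' : t < n := by omega
      have h0 := hLapp t htn' p
      have hAper : ∀ j : Fin n, A p j = if (j : ℕ) < k then 1 else 0 := by
        intro j
        by_cases hj : (j : ℕ) < k
        · rw [if_pos hj]
          exact hhub p j (fun e => by rw [e] at hpk; omega) (Or.inr hj)
        · rw [if_neg hj]
          exact hper p j hpk (le_of_not_gt hj)
      have hdp : d p = (k:ℝ) := by
        rw [hd, Finset.sum_congr rfl fun j _ => hAper j, hcardk]
      rw [Finset.sum_congr rfl (fun j _ => by rw [hAper j]), hdp, hln t ht] at h0
      linear_combination h0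
    -- linear independence of the hub restrictions
    have hkk : k ≤ n := hkltn.le
    have hnkne : ((n:ℝ) - k) ≠ 0 := by
      have : (k:ℝ) < n := by exact_mod_cast hkltn
      linarith
    set u : Fin (k+1) → Fin k → ℝ := fun t j => q (t : ℕ) (Fin.castLE hkk j) with hu
    have hli : LinearIndependent ℝ u := by
      rw [Fintype.linearIndependent_iff]
      intro g hg
      have hhub0 : ∀ i : Fin n, (i : ℕ) < k → ∑ t : Fin (k+1), g t * q (t:ℕ) i = 0 := by
        intro i hik
        have h0 := congrFun hg (⟨(i:ℕ), hik⟩ : Fin k)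
        rw [Finset.sum_apply] at h0
        simp only [Pi.smul_apply, smul_eq_mul, hu, Pi.zero_apply] at h0
        have hce : Fin.castLE hkk (⟨(i:ℕ), hik⟩ : Fin k) = i := by
          apply Fin.ext; rfl
        rw [hce] at h0
        exact h0
      have hall0 : ∀ i : Fin n, ∑ t : Fin (k+1), g t * q (t:ℕ) i = 0 := by
        intro i
        by_cases hik : (i : ℕ) < k
        · exact hhub0 i hik
        · have hik' : k ≤ (i : ℕ) := le_of_not_gt hik
          have h1 : ((n:ℝ) - k) * ∑ t : Fin (k+1), g t * q (t:ℕ) i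
              = ∑ t : Fin (k+1), g t * (((n:ℝ) - k) * q (t:ℕ) i) := by
            rw [Finset.mul_sum]
            exact Finset.sum_congr rfl fun t _ => by ring
          have h2 : ∀ t : Fin (k+1),
              g t * (((n:ℝ) - k) * q (t:ℕ) i)
              = -(g t * ∑ j : Fin n, (if (j : ℕ) < k then (1:ℝ) else 0) * q (t:ℕ) j) := by
            intro t
            rw [hpc (t:ℕ) (by omega) i hik']
            ring
          have h3 : ∑ t : Fin (k+1), g t * ∑ j : Fin n, (if (j : ℕ) < k then (1:ℝ) else 0) * q (t:ℕ) j
              = 0 := by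
            have hsw : ∑ t : Fin (k+1), g t * ∑ j : Fin n, (if (j : ℕ) < k then (1:ℝ) else 0) * q (t:ℕ) j
                = ∑ j : Fin n, (if (j : ℕ) < k then (1:ℝ) else 0)
                    * ∑ t : Fin (k+1), g t * q (t:ℕ) j := by
              have e1 : ∀ t : Fin (k+1),
                  g t * ∑ j : Fin n, (if (j : ℕ) < k then (1:ℝ) else 0) * q (t:ℕ) j
                  = ∑ j : Fin n, g t * ((if (j : ℕ) < k then (1:ℝ) else 0) * q (t:ℕ) j) :=
                fun t => Finset.mul_sum _ _ _
              have e2 : ∀ j : Fin n,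
                  (if (j : ℕ) < k then (1:ℝ) else 0) * ∑ t : Fin (k+1), g t * q (t:ℕ) j
                  = ∑ t : Fin (k+1), g t * ((if (j : ℕ) < k then (1:ℝ) else 0) * q (t:ℕ) j) := by
                intro j
                rw [Finset.mul_sum]
                exact Finset.sum_congr rfl fun t _ => by ring
              rw [Finset.sum_congr rfl fun t _ => e1 t,
                Finset.sum_congr rfl fun j _ => e2 j]
              exact Finset.sum_comm
            rw [hsw]
            apply Finset.sum_eq_zero
            intro j _
            by_cases hj : (j : ℕ) < k
            · rw [hhub0 j hj, mul_zero]
            · rw [if_neg hj, zero_mul]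
          have h4 : ((n:ℝ) - k) * ∑ t : Fin (k+1), g t * q (t:ℕ) i = 0 := by
            rw [h1, Finset.sum_congr rfl fun t _ => h2 t, Finset.sum_neg_distrib, h3,
              neg_zero]
          exact (mul_eq_zero.mp h4).resolve_left hnkne
      intro t
      have htl : (t : ℕ) < n := by have := t.isLt; omega
      have h5 : ∀ t' : Fin (k+1),
          ∑ i, (g t' * q (t':ℕ) i) * q (t:ℕ) i = if t' = t then g t' else 0 := by
        intro t'
        have ht'l : (t' : ℕ) < n := by have := t'.isLt; omega
        have h6 : ∑ i, (g t' * q (t':ℕ) i) * q (t:ℕ) i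
            = g t' * ∑ i, q (t':ℕ) i * q (t:ℕ) i := by
          rw [Finset.mul_sum]
          exact Finset.sum_congr rfl fun i _ => by ring
        rw [h6, horth (t':ℕ) ht'l (t:ℕ) htl]
        by_cases he : t' = t
        · simp [he]
        · rw [if_neg (fun e => he (Fin.ext e)), if_neg he, mul_zero]
      have h7 : g t = ∑ t' : Fin (k+1), if t' = t then g t' else 0 := by
        rw [Finset.sum_ite_eq' univ t g]
        simp
      rw [h7, Finset.sum_congr rfl fun t' _ => (h5 t').symm, Finset.sum_comm]
      have h8 : ∀ i : Fin n,
          ∑ t' : Fin (k+1), (g t' * q (t':ℕ) i) * q (t:ℕ) i = 0 := by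
        intro i
        rw [← Finset.sum_mul, hall0 i, zero_mul]
      rw [Finset.sum_congr rfl fun i _ => h8 i]
      simp
    have hcard := hli.fintype_card_le_finrank
    have hcard' : k + 1 ≤ k := by simpa using hcard
    omega
  -- hub coordinates of q s vanish for k ≤ s < n - 1
  have hvan : ∀ s : ℕ, k ≤ s → s < n - 1 → ∀ hb : Fin n, (hb : ℕ) < k → q s hb = 0 := by
    intro s hks hs hb hbk
    have h0 := hhubeq s (by omega) hb hbk
    rw [hsum0 s hs] at h0
    have h1 : (lam s - n) * q s hb = 0 := by linear_combination h0
    have h2 : lam s - n ≠ 0 := fun e => hmain s hks hs (by linarith [sub_eq_zero.mp e])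
    exact (mul_eq_zero.mp h1).resolve_left h2
  -- completeness: rows of the eigenvector matrix are unit vectors
  have hcomp : ∀ i : Fin n, ∑ s : Fin n, q (s : ℕ) i * q (s : ℕ) i = 1 := by
    intro i
    set Q : Matrix (Fin n) (Fin n) ℝ := Matrix.of fun i s => q (s : ℕ) i with hQdef
    have h1 : Qᵀ * Q = 1 := by
      ext s t
      rw [Matrix.mul_apply]
      simp only [hQdef, Matrix.transpose_apply, Matrix.of_apply]
      rw [horth s s.isLt t t.isLt]
      by_cases hst : s = t
      · subst hst; rw [if_pos rfl, Matrix.one_apply_eq]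
      · rw [if_neg (fun e => hst (Fin.ext e)), Matrix.one_apply_ne hst]
    have h2 : Q * Qᵀ = 1 := mul_eq_one_comm.mp h1
    have h3 := congrFun (congrFun h2 i) i
    rw [Matrix.mul_apply] at h3
    simp only [hQdef, Matrix.transpose_apply, Matrix.of_apply] at h3
    rw [h3, Matrix.one_apply_eq]
  -- final assembly
  intro h hh
  rw [hlec]
  have htot : ∑ s ∈ Finset.range n, q s h * q s h = 1 := by
    rw [← Fin.sum_univ_eq_sum_range (fun s => q s h * q s h) n]
    exact hcomp h
  have hsplit : Finset.range n = Finset.range (n - 1) ∪ Finset.Ico (n - 1) n := by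
    rw [Finset.range_eq_Ico, Finset.range_eq_Ico]
    exact (Finset.Ico_union_Ico_eq_Ico (by omega) (by omega)).symm
  have hsplit2 : Finset.range (n - 1) = Finset.range k ∪ Finset.Ico k (n - 1) := by
    rw [Finset.range_eq_Ico, Finset.range_eq_Ico]
    exact (Finset.Ico_union_Ico_eq_Ico (by omega) hkn).symm
  have hIco1 : Finset.Ico (n - 1) n = {n - 1} := by
    rw [show n = (n - 1) + 1 by omega]
    simp
  have hmid : ∑ s ∈ Finset.Ico k (n - 1), q s h * q s h = 0 := by
    apply Finset.sum_eq_zero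
    intro s hs
    rw [Finset.mem_Ico] at hs
    rw [hvan s hs.1 hs.2 h hh, mul_zero]
  have h4 : ∑ s ∈ Finset.range n, q s h * q s h
      = (∑ s ∈ Finset.range k, q s h * q s h) + q (n - 1) h * q (n - 1) h := by
    rw [hsplit, Finset.sum_union (by
        rw [Finset.range_eq_Ico]
        exact Finset.Ico_disjoint_Ico_consecutive 0 (n-1) n),
      hsplit2, Finset.sum_union (by
        rw [Finset.range_eq_Ico]
        exact Finset.Ico_disjoint_Ico_consecutive 0 k (n-1)),
      hmid, hIco1]
    simp
  rw [h4] at htot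
  have : ∀ s ∈ Finset.range k, q s h * q s h = q s h ^ 2 := fun s _ => (sq (q s h)).symm
  rw [Finset.sum_congr rfl this] at htot
  rw [← htot, sq]
  ring
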